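/- Every cyclic cochain complex is of Hodge type, i.e. every cochain complex (A,d) with a perfect pairing ⟨·,·⟩ of degree n admits a Hodge decomposition A = H ⊕ im d ⊕ C. -/

import Mathlib

set_option synthInstance.maxHeartbeats 400000
set_option maxHeartbeats 1000000

noncomputable section

/-- A cochain complex over `ℝ` (with a `ℤ`-grading realized as an internal direct sum
of submodules) together with a graded-symmetric pairing of degree `n` compatible with
the differential. -/
structure PairedComplex (A : Type*) [AddCommGroup A] [Module ℝ A] where
  /-- the grading `A = ⊕ᵢ Aⁱ` -/
  grading : ℤ → Submodule ℝ A
  internal : DirectSum.IsInternal grading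
  /-- the differential -/
  d : A →ₗ[ℝ] A
  d_degree : ∀ i : ℤ, ∀ x ∈ grading i, d x ∈ grading (i + 1)
  d_sq : ∀ x : A, d (d x) = 0
  /-- the degree of the pairing -/
  n : ℤ
  /-- the pairing -/
  pair : A →ₗ[ℝ] A →ₗ[ℝ] ℝ
  pair_degree : ∀ i j : ℤ, i + j ≠ n → ∀ x ∈ grading i, ∀ y ∈ grading j, pair x y = 0
  pair_symm : ∀ i j : ℤ, ∀ x ∈ grading i, ∀ y ∈ grading j,
      pair x y = (-1 : ℝ) ^ (i * j) * pair y x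
  pair_d : ∀ i : ℤ, ∀ x ∈ grading i, ∀ y : A,
      pair (d x) y = (-1 : ℝ) ^ (1 + i) * pair x (d y)

namespace PairedComplex

variable {A : Type*} [AddCommGroup A] [Module ℝ A] (X : PairedComplex A)

/-- `f` is homogeneous of degree `k`. -/
def IsDegree (f : A →ₗ[ℝ] A) (k : ℤ) : Prop :=
  ∀ i : ℤ, ∀ x ∈ X.grading i, f x ∈ X.grading (i + k)

/-- A chain map: a degree `0` map commuting with the differential. -/
def IsChainMap (f : A →ₗ[ℝ] A) : Prop :=
  X.IsDegree f 0 ∧ ∀ x : A, f (X.d x) = X.d (f x)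

/-- A projection: an idempotent chain map. -/
def IsProjection (p : A →ₗ[ℝ] A) : Prop :=
  X.IsChainMap p ∧ ∀ x : A, p (p x) = p x

/-- The projection `π_P = id + d∘P + P∘d` associated to a homotopy operator `P`. -/
def assocProj (P : A →ₗ[ℝ] A) : A →ₗ[ℝ] A :=
  LinearMap.id + X.d ∘ₗ P + P ∘ₗ X.d

/-- A homotopy operator: a degree `-1` map such that `−d∘P − P∘d` is a projection. -/
def IsHomotopyOperator (P : A →ₗ[ℝ] A) : Prop :=
  X.IsDegree P (-1) ∧ X.IsProjection (-(X.d ∘ₗ P) - P ∘ₗ X.d)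

/-- A homotopy operator `P` is special if `P∘P = 0` and `P∘d∘P = −P`. -/
def IsSpecial (P : A →ₗ[ℝ] A) : Prop :=
  (∀ x : A, P (P x) = 0) ∧ ∀ x : A, P (X.d (P x)) = -(P x)

/-- The symmetry property `⟨Px,y⟩ = (−1)^{deg x} ⟨x,Py⟩` of a propagator. -/
def IsSymmetricDeg (P : A →ₗ[ℝ] A) : Prop :=
  ∀ i : ℤ, ∀ x ∈ X.grading i, ∀ y : A,
    X.pair (P x) y = (-1 : ℝ) ^ i * X.pair x (P y)

/-- A propagator: a homotopy operator satisfying the symmetry property. -/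
def IsPropagator (P : A →ₗ[ℝ] A) : Prop :=
  X.IsHomotopyOperator P ∧ X.IsSymmetricDeg P

/-- A symmetric operator: `⟨px,y⟩ = ⟨x,py⟩`. -/
def IsSymmetric (p : A →ₗ[ℝ] A) : Prop :=
  ∀ x y : A, X.pair (p x) y = X.pair x (p y)

/-- Nondegeneracy of the pairing. -/
def Nondegenerate : Prop :=
  ∀ x : A, (∀ y : A, X.pair x y = 0) → x = 0

/-- The pairing is perfect: the musical map `x ↦ ⟨x,·⟩` is an isomorphism onto the
graded dual, i.e. it is injective and every linear functional on `A^{n-i}` is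
represented by an element of `A^i`. -/
def Perfect : Prop :=
  X.Nondegenerate ∧
    ∀ i : ℤ, ∀ φ : ↥(X.grading (X.n - i)) →ₗ[ℝ] ℝ,
      ∃ x ∈ X.grading i, ∀ y : ↥(X.grading (X.n - i)), X.pair x (y : A) = φ y

/-- A chain map induces an isomorphism on cohomology (elementwise formulation). -/
def IsQuasiIso (f : A →ₗ[ℝ] A) : Prop :=
  (∀ x : A, X.d x = 0 → ∃ y : A, X.d y = 0 ∧ ∃ z : A, f y - x = X.d z) ∧
  (∀ y : A, X.d y = 0 → (∃ z : A, f y = X.d z) → ∃ w : A, y = X.d w)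

/-- A graded subspace: spanned by its homogeneous elements. -/
def IsGradedSubspace (B : Submodule ℝ A) : Prop :=
  ∀ x ∈ B, x ∈ ⨆ i : ℤ, B ⊓ X.grading i

/-- A subcomplex: a graded subspace preserved by the differential. -/
def IsSubcomplex (B : Submodule ℝ A) : Prop :=
  X.IsGradedSubspace B ∧ ∀ x ∈ B, X.d x ∈ B

/-- The inclusion `B ↪ A` is a quasi-isomorphism (elementwise formulation). -/
def InclQuasiIso (B : Submodule ℝ A) : Prop :=
  (∀ x : A, X.d x = 0 → ∃ b ∈ B, X.d b = 0 ∧ ∃ z : A, x - b = X.d z) ∧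
  (∀ b ∈ B, X.d b = 0 → (∃ z : A, b = X.d z) → ∃ c ∈ B, b = X.d c)

/-- The restriction of the pairing to `B` is perfect. -/
def SubPerfect (B : Submodule ℝ A) : Prop :=
  (∀ x ∈ B, (∀ y ∈ B, X.pair x y = 0) → x = 0) ∧
    ∀ i : ℤ, ∀ φ : ↥(B ⊓ X.grading (X.n - i)) →ₗ[ℝ] ℝ,
      ∃ x ∈ B ⊓ X.grading i, ∀ y : ↥(B ⊓ X.grading (X.n - i)), X.pair x (y : A) = φ y

/-- The orthogonal complement `B^⊥ = {x | ⟨x,b⟩ = 0 ∀ b ∈ B}`. -/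
def perp (B : Submodule ℝ A) : Submodule ℝ A where
  carrier := {x : A | ∀ b ∈ B, X.pair x b = 0}
  add_mem' := by
    intro x y hx hy
    intro b hb
    have hx' := hx b hb
    have hy' := hy b hb
    simp only [map_add, LinearMap.add_apply, hx', hy', add_zero]
  zero_mem' := by
    intro b hb
    simp
  smul_mem' := by
    intro c x hx b hb
    have hx' := hx b hb
    simp only [map_smul, LinearMap.smul_apply, hx', smul_zero]

/-- A harmonic subspace: a graded subspace `H` with `ker d = H ⊕ im d`. -/
def IsHarmonic (H : Submodule ℝ A) : Prop :=
  X.IsGradedSubspace H ∧ H ≤ LinearMap.ker X.d ∧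
    H ⊓ LinearMap.range X.d = ⊥ ∧ H ⊔ LinearMap.range X.d = LinearMap.ker X.d

/-- A Hodge decomposition `B = H ⊕ d(B) ⊕ C` of a subcomplex `B ⊆ A` (with respect to
the restricted pairing); taking `B = ⊤` gives a Hodge decomposition of `A`. -/
def IsHodgeOn (B H C : Submodule ℝ A) : Prop :=
  H ≤ B ∧ C ≤ B ∧ X.IsGradedSubspace H ∧ X.IsGradedSubspace C ∧
  H ≤ LinearMap.ker X.d ∧
  H ⊓ Submodule.map X.d B = ⊥ ∧
  H ⊔ Submodule.map X.d B = LinearMap.ker X.d ⊓ B ∧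
  C ⊓ LinearMap.ker X.d = ⊥ ∧
  C ⊔ (LinearMap.ker X.d ⊓ B) = B ∧
  (∀ c ∈ C, ∀ c' ∈ C, X.pair c c' = 0) ∧
  (∀ c ∈ C, ∀ h ∈ H, X.pair c h = 0)

/-- A Hodge decomposition `A = H ⊕ im d ⊕ C` of the full complex. -/
def IsHodge (H C : Submodule ℝ A) : Prop :=
  X.IsHodgeOn ⊤ H C

/-- `A` is of Hodge type if it admits a Hodge decomposition. -/
def IsHodgeType : Prop :=
  ∃ H C : Submodule ℝ A, X.IsHodge H C

/-- The operator `P_{H,C}` canonically associated to a Hodge decomposition `(H,C)`: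
`P(dy) = −y` for `y ∈ C`, and `P = 0` on `H ⊕ C`. -/
def IsHodgeOperator (H C : Submodule ℝ A) (P : A →ₗ[ℝ] A) : Prop :=
  (∀ y ∈ C, P (X.d y) = -y) ∧ (∀ x ∈ H, P x = 0) ∧ ∀ x ∈ C, P x = 0

/-- The degenerate subspace `A_deg = {a | ⟨a,x⟩ = 0 ∀ x}`. -/
def degSub : Submodule ℝ A := X.perp ⊤

/-- The induced pairing on cohomology is nondegenerate (elementwise formulation). -/
def CohomNondeg : Prop :=
  ∀ x : A, X.d x = 0 → (∀ y : A, X.d y = 0 → X.pair x y = 0) → ∃ z : A, x = X.d z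

/-- The induced pairing on cohomology is perfect (elementwise formulation). -/
def CohomPerfect : Prop :=
  X.CohomNondeg ∧
    ∀ i : ℤ, ∀ φ : ↥(LinearMap.ker X.d ⊓ X.grading (X.n - i)) →ₗ[ℝ] ℝ,
      (∀ y : ↥(LinearMap.ker X.d ⊓ X.grading (X.n - i)),
          (∃ z : A, (y : A) = X.d z) → φ y = 0) →
      ∃ x ∈ LinearMap.ker X.d ⊓ X.grading i,
        ∀ y : ↥(LinearMap.ker X.d ⊓ X.grading (X.n - i)), X.pair x (y : A) = φ y

end PairedComplex

namespace PairedComplex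

variable {A : Type*} [AddCommGroup A] [Module ℝ A] (X : PairedComplex A)

/-- A realization of the nondegenerate quotient `Q(A) = A / A_deg`:
a surjective chain map with kernel `A_deg` preserving pairings, gradings and degree. -/
def IsQuotientMap {B : Type*} [AddCommGroup B] [Module ℝ B]
    (Y : PairedComplex B) (q : A →ₗ[ℝ] B) : Prop :=
  Function.Surjective q ∧
  LinearMap.ker q = X.degSub ∧
  (∀ x : A, q (X.d x) = Y.d (q x)) ∧
  (∀ x y : A, Y.pair (q x) (q y) = X.pair x y) ∧
  (∀ i : ℤ, ∀ x ∈ X.grading i, q x ∈ Y.grading i) ∧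
  Y.n = X.n

/-- A Hodge star on a nonnegatively graded cochain complex with pairing of degree `n`:
a degree-reversing involution (up to sign) such that `(x,y) := ⟨x,⋆y⟩` is a positive
definite inner product. -/
def IsHodgeStar (star : A →ₗ[ℝ] A) : Prop :=
  (∀ i : ℤ, ∀ x ∈ X.grading i, star x ∈ X.grading (X.n - i)) ∧
  (∀ i : ℤ, ∀ x ∈ X.grading i, star (star x) = ((-1 : ℝ) ^ (i * (X.n - i))) • x) ∧
  (∀ x y : A, X.pair x (star y) = X.pair y (star x)) ∧
  (∀ x : A, x ≠ 0 → 0 < X.pair x (star x))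

end PairedComplex

/-- A differential graded algebra with pairing: a `PairedComplex` together with an
associative product of degree `0` satisfying the Leibniz rule and compatible with the
pairing. -/
structure PairedDGA (A : Type*) [AddCommGroup A] [Module ℝ A] extends
    PairedComplex A where
  /-- the product -/
  mul : A →ₗ[ℝ] A →ₗ[ℝ] A
  mul_degree : ∀ i j : ℤ, ∀ x ∈ grading i, ∀ y ∈ grading j, mul x y ∈ grading (i + j)
  mul_assoc' : ∀ x y z : A, mul (mul x y) z = mul x (mul y z)
  leibniz : ∀ i : ℤ, ∀ x ∈ grading i, ∀ y : A,
      d (mul x y) = mul (d x) y + ((-1 : ℝ) ^ i) • mul x (d y)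
  pair_mul : ∀ x y z : A, pair (mul x y) z = pair x (mul y z)

namespace PairedDGA

variable {A : Type*} [AddCommGroup A] [Module ℝ A] (Y : PairedDGA A)

/-- `one` is a unit for the product. -/
def IsUnit (one : A) : Prop :=
  one ≠ 0 ∧ one ∈ Y.grading 0 ∧ ∀ x : A, Y.mul one x = x ∧ Y.mul x one = x

/-- graded commutativity. -/
def IsCommutative : Prop :=
  ∀ i j : ℤ, ∀ x ∈ Y.grading i, ∀ y ∈ Y.grading j,
    Y.mul x y = ((-1 : ℝ) ^ (i * j)) • Y.mul y x

/-- An orientation of degree `n` inducing the pairing: a chain-level functional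
supported in degree `n`, vanishing on boundaries, nontrivial on cohomology,
with `⟨x,y⟩ = o(x∧y)`. -/
def IsOrientation (o : A →ₗ[ℝ] ℝ) : Prop :=
  (∀ i : ℤ, i ≠ Y.n → ∀ x ∈ Y.grading i, o x = 0) ∧
  (∀ x : A, o (Y.d x) = 0) ∧
  (∃ x : A, Y.d x = 0 ∧ o x ≠ 0) ∧
  (∀ x y : A, Y.pair x y = o (Y.mul x y))

/-- The small subalgebra `S_P`: the smallest graded dg-subalgebra containing the
harmonic subspace `H_P = im π_P` and preserved by `P`. -/
def smallSub (P : A →ₗ[ℝ] A) : Submodule ℝ A :=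
  sInf {S : Submodule ℝ A |
    LinearMap.range (Y.toPairedComplex.assocProj P) ≤ S ∧
    Y.toPairedComplex.IsGradedSubspace S ∧
    (∀ x ∈ S, Y.d x ∈ S) ∧
    (∀ x ∈ S, ∀ y ∈ S, Y.mul x y ∈ S) ∧
    (∀ x ∈ S, P x ∈ S)}

end PairedDGA

/-- Elements of `A` obtained from homogeneous elements of the harmonic subspace
`H_P = im π_P` by iterated applications of `P` and of the product. -/
inductive TreeGen {A : Type*} [AddCommGroup A] [Module ℝ A]
    (Y : PairedDGA A) (P : A →ₗ[ℝ] A) : A → Prop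
  | base : ∀ (i : ℤ) (x : A), x ∈ Y.grading i →
      x ∈ LinearMap.range (Y.toPairedComplex.assocProj P) → TreeGen Y P x
  | mul : ∀ x y : A, TreeGen Y P x → TreeGen Y P y → TreeGen Y P (Y.mul x y)
  | app : ∀ x : A, TreeGen Y P x → TreeGen Y P (P x)


section HodgeAux

variable {A : Type*} [AddCommGroup A] [Module ℝ A]

/-- A complement of `U` inside `T`. -/
lemma exists_compl_within (U T : Submodule ℝ A) (hUT : U ≤ T) :
    ∃ K : Submodule ℝ A, K ≤ T ∧ U ⊓ K = ⊥ ∧ U ⊔ K = T := by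
  obtain ⟨q, hq⟩ := Submodule.exists_isCompl (U.comap T.subtype)
  refine ⟨q.map T.subtype, Submodule.map_subtype_le T q, ?_, ?_⟩
  · apply (Submodule.eq_bot_iff _).mpr
    rintro x ⟨hxU, hxK⟩
    obtain ⟨⟨y, hyT⟩, hyq, rfl⟩ := hxK
    have hmem : (⟨y, hyT⟩ : ↥T) ∈ U.comap T.subtype ⊓ q := ⟨hxU, hyq⟩
    rw [hq.inf_eq_bot, Submodule.mem_bot] at hmem
    simp [hmem]
  · apply le_antisymm
    · exact sup_le hUT (Submodule.map_subtype_le T q)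
    · intro x hx
      have h2 : (⟨x, hx⟩ : ↥T) ∈ U.comap T.subtype ⊔ q := by
        rw [hq.sup_eq_top]; trivial
      obtain ⟨u, hu, v, hv, huv⟩ := Submodule.mem_sup.mp h2
      have : x = (u : A) + (v : A) := by
        have := congrArg (Subtype.val) huv; simpa using this.symm
      rw [this]
      exact Submodule.add_mem_sup hu ⟨v, hv, rfl⟩

/-- Extension of a linear functional from `S` to `T = S ⊕ K`, vanishing on `K`. -/
lemma exists_extend_functional (S K T : Submodule ℝ A) (hST : S ≤ T) (hKT : K ≤ T)
    (hdisj : S ⊓ K = ⊥) (hsup : S ⊔ K = T) (φ : ↥S →ₗ[ℝ] ℝ) :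
    ∃ ψ : ↥T →ₗ[ℝ] ℝ,
      (∀ (x : A) (hx : x ∈ S), ψ ⟨x, hST hx⟩ = φ ⟨x, hx⟩) ∧
      (∀ (x : A) (hx : x ∈ K), ψ ⟨x, hKT hx⟩ = 0) := by
  set S' := S.comap T.subtype with hS'
  set K' := K.comap T.subtype with hK'
  have hcompl : IsCompl S' K' := by
    constructor
    · rw [disjoint_iff]
      apply (Submodule.eq_bot_iff _).mpr
      rintro ⟨x, hxT⟩ ⟨h1, h2⟩
      have hmem : x ∈ S ⊓ K := ⟨h1, h2⟩
      rw [hdisj, Submodule.mem_bot] at hmem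
      exact Subtype.ext hmem
    · rw [codisjoint_iff]
      apply eq_top_iff.mpr
      rintro ⟨x, hxT⟩ -
      have hx2 : x ∈ S ⊔ K := hsup ▸ hxT
      obtain ⟨s, hs, k, hk, hsk⟩ := Submodule.mem_sup.mp hx2
      have : (⟨x, hxT⟩ : ↥T) = ⟨s, hST hs⟩ + ⟨k, hKT hk⟩ := by
        exact Subtype.ext (by simp [hsk])
      rw [this]
      exact Submodule.add_mem_sup (show (⟨s, hST hs⟩ : ↥T) ∈ S' from hs)
        (show (⟨k, hKT hk⟩ : ↥T) ∈ K' from hk)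
  let m : ↥S' →ₗ[ℝ] ↥S :=
    LinearMap.codRestrict S ((T.subtype).comp S'.subtype) (fun x => x.2)
  refine ⟨(φ.comp m).comp (S'.linearProjOfIsCompl K' hcompl), ?_, ?_⟩
  · intro x hx
    have hx' : (⟨x, hST hx⟩ : ↥T) ∈ S' := hx
    have hproj : (S'.linearProjOfIsCompl K' hcompl) ⟨x, hST hx⟩ = ⟨⟨x, hST hx⟩, hx'⟩ := by
      exact Submodule.linearProjOfIsCompl_apply_left hcompl ⟨⟨x, hST hx⟩, hx'⟩
    simp only [LinearMap.comp_apply, hproj]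
    congr 1
  · intro x hx
    have hx' : (⟨x, hKT hx⟩ : ↥T) ∈ K' := hx
    have hproj : (S'.linearProjOfIsCompl K' hcompl) ⟨x, hKT hx⟩ = 0 :=
      Submodule.projectionOnto_apply_of_mem_right hcompl hx'
    simp [LinearMap.comp_apply, hproj]

lemma neg_one_zpow_cases (m : ℤ) : (-1 : ℝ) ^ m = 1 ∨ (-1 : ℝ) ^ m = -1 := by
  rcases Int.even_or_odd m with h | h
  · exact Or.inl h.neg_one_zpow
  · exact Or.inr h.neg_one_zpow

lemma neg_one_zpow_mul_self (m : ℤ) : (-1 : ℝ) ^ m * (-1 : ℝ) ^ m = 1 := by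
  rcases neg_one_zpow_cases m with h | h <;> rw [h] <;> norm_num

end HodgeAux

namespace PairedComplex

variable {A : Type*} [AddCommGroup A] [Module ℝ A] (X : PairedComplex A)

/-- The linear equivalence `⨁ i, Aⁱ ≃ A` coming from internality of the grading. -/
def decompEquiv : (DirectSum ℤ fun i => ↥(X.grading i)) ≃ₗ[ℝ] A :=
  LinearEquiv.ofBijective (DirectSum.coeLinearMap X.grading) X.internal

lemma decompEquiv_symm_of_mem {i : ℤ} {x : A} (hx : x ∈ X.grading i) :
    X.decompEquiv.symm x i = ⟨x, hx⟩ :=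
  X.internal.ofBijective_coeLinearMap_of_mem hx

lemma decompEquiv_symm_of_mem_ne {i j : ℤ} {x : A} (hx : x ∈ X.grading i) (hij : i ≠ j) :
    X.decompEquiv.symm x j = 0 :=
  X.internal.ofBijective_coeLinearMap_of_mem_ne hij hx

/-- The projection onto the degree `i` component. -/
def pr (i : ℤ) : A →ₗ[ℝ] A :=
  (X.grading i).subtype ∘ₗ (DFinsupp.lapply i) ∘ₗ X.decompEquiv.symm.toLinearMap

lemma pr_apply (i : ℤ) (x : A) : X.pr i x = ↑(X.decompEquiv.symm x i) := rfl

lemma pr_mem (i : ℤ) (x : A) : X.pr i x ∈ X.grading i := by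
  rw [pr_apply]; exact SetLike.coe_mem _

lemma pr_of_mem {i : ℤ} {x : A} (hx : x ∈ X.grading i) : X.pr i x = x := by
  rw [pr_apply, X.decompEquiv_symm_of_mem hx]

lemma pr_of_mem_ne {i j : ℤ} {x : A} (hx : x ∈ X.grading j) (hij : i ≠ j) :
    X.pr i x = 0 := by
  rw [pr_apply, X.decompEquiv_symm_of_mem_ne hx (Ne.symm hij), Submodule.coe_zero]

lemma exists_sum_pr (x : A) : ∃ s : Finset ℤ, x = ∑ i ∈ s, X.pr i x := by
  classical
  refine ⟨(X.decompEquiv.symm x).support, ?_⟩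
  have h2 : ∑ i ∈ (X.decompEquiv.symm x).support, X.pr i x
      = DirectSum.coeLinearMap X.grading (X.decompEquiv.symm x) := by
    rw [DirectSum.coeLinearMap_eq_dfinsuppSum, DFinsupp.sum]
    exact Finset.sum_congr rfl fun i _ => X.pr_apply i x
  have h3 : DirectSum.coeLinearMap X.grading (X.decompEquiv.symm x) = x :=
    X.decompEquiv.apply_symm_apply x
  rw [h2, h3]

lemma ext_graded {B : Type*} [AddCommGroup B] [Module ℝ B] (f g : A →ₗ[ℝ] B)
    (h : ∀ i : ℤ, ∀ x ∈ X.grading i, f x = g x) : f = g := by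
  apply LinearMap.ext
  intro x
  obtain ⟨s, hs⟩ := X.exists_sum_pr x
  rw [hs, map_sum, map_sum]
  exact Finset.sum_congr rfl fun i _ => h i _ (X.pr_mem i x)

lemma d_pr (i : ℤ) (x : A) : X.d (X.pr i x) = X.pr (i + 1) (X.d x) := by
  have key : X.d ∘ₗ X.pr i = X.pr (i + 1) ∘ₗ X.d := by
    apply X.ext_graded
    intro j y hy
    simp only [LinearMap.comp_apply]
    by_cases hij : i = j
    · subst hij
      rw [X.pr_of_mem hy, X.pr_of_mem (X.d_degree i y hy)]
    · rw [X.pr_of_mem_ne hy hij, map_zero,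
        X.pr_of_mem_ne (X.d_degree j y hy) (by omega)]
  exact LinearMap.congr_fun key x

lemma pr_ker {x : A} (hx : X.d x = 0) (i : ℤ) : X.d (X.pr i x) = 0 := by
  rw [X.d_pr, hx, map_zero]

lemma pr_range {x : A} (hx : x ∈ LinearMap.range X.d) (i : ℤ) :
    X.pr i x ∈ LinearMap.range X.d := by
  obtain ⟨y, rfl⟩ := hx
  refine ⟨X.pr (i - 1) y, ?_⟩
  rw [X.d_pr, sub_add_cancel]

lemma pair_eq_zero_of_pr (x y : A)
    (h : ∀ i j : ℤ, X.pair (X.pr i x) (X.pr j y) = 0) : X.pair x y = 0 := by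
  obtain ⟨s, hs⟩ := X.exists_sum_pr x
  obtain ⟨t, ht⟩ := X.exists_sum_pr y
  rw [hs, ht, map_sum]
  apply Finset.sum_eq_zero
  intro j _
  have hmap : X.pair (∑ i ∈ s, X.pr i x) = ∑ i ∈ s, X.pair (X.pr i x) :=
    map_sum X.pair _ s
  rw [hmap, LinearMap.coe_sum, Finset.sum_apply]
  exact Finset.sum_eq_zero fun i _ => h i j

lemma pair_range_ker {b z : A} (hb : b ∈ LinearMap.range X.d) (hz : X.d z = 0) :
    X.pair b z = 0 := by
  apply X.pair_eq_zero_of_pr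
  intro i j
  obtain ⟨y, rfl⟩ := hb
  have h1 : X.pr i (X.d y) = X.d (X.pr (i - 1) y) := by
    rw [X.d_pr, sub_add_cancel]
  rw [h1, X.pair_d (i - 1) _ (X.pr_mem _ y), X.pr_ker hz, map_zero, mul_zero]

lemma pair_ker_range {b z : A} (hb : b ∈ LinearMap.range X.d) (hz : X.d z = 0) :
    X.pair z b = 0 := by
  apply X.pair_eq_zero_of_pr
  intro i j
  obtain ⟨y, rfl⟩ := hb
  have h1 : X.pr j (X.d y) = X.d (X.pr (j - 1) y) := by
    rw [X.d_pr, sub_add_cancel]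
  rw [h1, X.pair_symm i (j - 1 + 1) _ (X.pr_mem i z) _
      (X.d_degree (j - 1) _ (X.pr_mem _ y)),
    X.pair_d (j - 1) _ (X.pr_mem _ y), X.pr_ker hz, map_zero, mul_zero, mul_zero]

lemma nondeg_graded (hnd : X.Nondegenerate) {i : ℤ} {x : A} (hx : x ∈ X.grading i)
    (h : ∀ y ∈ X.grading (X.n - i), X.pair x y = 0) : x = 0 := by
  apply hnd
  intro y
  obtain ⟨t, ht⟩ := X.exists_sum_pr y
  rw [ht, map_sum]
  apply Finset.sum_eq_zero
  intro j _
  rcases eq_or_ne j (X.n - i) with hj | hj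
  · subst hj; exact h _ (X.pr_mem _ y)
  · exact X.pair_degree i j (by omega) x hx _ (X.pr_mem j y)

lemma mem_ker_of_perp_range (hnd : X.Nondegenerate) {i : ℤ} {x : A}
    (hx : x ∈ X.grading i)
    (h : ∀ y ∈ X.grading (X.n - i - 1), X.pair x (X.d y) = 0) : X.d x = 0 := by
  apply X.nondeg_graded hnd (X.d_degree i x hx)
  intro y hy
  rw [show X.n - (i + 1) = X.n - i - 1 from by ring] at hy
  rw [X.pair_d i x hx y, h y hy, mul_zero]

lemma mem_range_of_perp_ker (hperf : X.Perfect) {i : ℤ} {x : A}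
    (hx : x ∈ X.grading i)
    (h : ∀ z ∈ X.grading (X.n - i), X.d z = 0 → X.pair x z = 0) :
    x ∈ LinearMap.range X.d := by
  classical
  set j := X.n - i with hj
  set Bn : Submodule ℝ A := LinearMap.range X.d ⊓ X.grading (j + 1) with hBn
  have hmemBn : ∀ v : ↥(X.grading j), X.d ↑v ∈ Bn :=
    fun v => ⟨LinearMap.mem_range_self _ _, X.d_degree j _ v.2⟩
  set d'' : ↥(X.grading j) →ₗ[ℝ] ↥Bn :=
    LinearMap.codRestrict Bn (X.d ∘ₗ (X.grading j).subtype) hmemBn with hd''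
  have hsurj : LinearMap.range d'' = ⊤ := by
    rw [LinearMap.range_eq_top]
    rintro ⟨b, hbr, hbg⟩
    obtain ⟨y, hy⟩ := hbr
    refine ⟨⟨X.pr j y, X.pr_mem j y⟩, ?_⟩
    apply Subtype.ext
    show X.d (X.pr j y) = b
    rw [X.d_pr, hy, X.pr_of_mem hbg]
  obtain ⟨sct, hsct⟩ := d''.exists_rightInverse_of_surjective hsurj
  set σ : ℝ := (-1 : ℝ) ^ (1 + (i - 1)) with hσ
  set φ₀ : ↥Bn →ₗ[ℝ] ℝ := σ • ((X.pair x) ∘ₗ (X.grading j).subtype ∘ₗ sct) with hφ₀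
  have hφ₀d : ∀ (u : A) (hu : u ∈ X.grading j) (hdu : X.d u ∈ Bn),
      φ₀ ⟨X.d u, hdu⟩ = σ * X.pair x u := by
    intro u hu hdu
    have h0 : φ₀ ⟨X.d u, hdu⟩ = σ * X.pair x ↑(sct ⟨X.d u, hdu⟩) := rfl
    have h1 : X.d ↑(sct ⟨X.d u, hdu⟩) = X.d u := by
      have := LinearMap.congr_fun hsct ⟨X.d u, hdu⟩
      exact congrArg Subtype.val this
    have h2 : X.pair x (↑(sct ⟨X.d u, hdu⟩) - u) = 0 := by
      refine h _ (sub_mem (sct ⟨X.d u, hdu⟩).2 hu) ?_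
      rw [map_sub, h1, sub_self]
    rw [map_sub] at h2
    rw [h0]
    have : X.pair x ↑(sct ⟨X.d u, hdu⟩) = X.pair x u := by linarith
    rw [this]
  obtain ⟨K, hKT, hdisj, hsup⟩ := exists_compl_within Bn (X.grading (j + 1)) inf_le_right
  obtain ⟨ψ, hψ1, _⟩ :=
    exists_extend_functional Bn K (X.grading (j + 1)) inf_le_right hKT hdisj hsup φ₀
  have hidx : X.n - (i - 1) = j + 1 := by rw [hj]; ring
  have hrep := hperf.2 (i - 1)
  rw [hidx] at hrep
  obtain ⟨w, hw, hwψ⟩ := hrep ψ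
  refine ⟨w, ?_⟩
  have hdw : X.d w ∈ X.grading i := by
    have := X.d_degree (i - 1) w hw
    rwa [sub_add_cancel] at this
  have hkey : ∀ u ∈ X.grading j, X.pair (X.d w) u = X.pair x u := by
    intro u hu
    have hdu : X.d u ∈ Bn := ⟨LinearMap.mem_range_self _ _, X.d_degree j u hu⟩
    rw [X.pair_d (i - 1) w hw u]
    have hduT : X.d u ∈ X.grading (j + 1) := hdu.2
    have h1 : X.pair w (X.d u) = ψ ⟨X.d u, hduT⟩ := hwψ ⟨X.d u, hduT⟩
    rw [h1, hψ1 _ hdu, hφ₀d u hu hdu, ← mul_assoc, ← hσ, neg_one_zpow_mul_self, one_mul]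
  have hzero : X.d w - x = 0 := by
    apply X.nondeg_graded hperf.1 (sub_mem hdw hx)
    intro y hy
    rw [map_sub, LinearMap.sub_apply, hkey y hy, sub_self]
  rw [sub_eq_zero] at hzero
  exact hzero

/-- The corrected isotropic complement pieces used in the Hodge decomposition. -/
def hodgeC (Cz Bs : ℤ → Submodule ℝ A) (i : ℤ) : Submodule ℝ A where
  carrier := {x | ∃ c ∈ Cz i, ∃ b ∈ Bs i, x = c + b ∧
    ∀ c' ∈ Cz (X.n - i), X.pair b c' = -(1/2 : ℝ) * X.pair c c'}
  add_mem' := by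
    rintro x y ⟨c, hc, b, hb, rfl, hx⟩ ⟨c', hc', b', hb', rfl, hy⟩
    refine ⟨c + c', add_mem hc hc', b + b', add_mem hb hb', by abel, ?_⟩
    intro c'' hc''
    rw [map_add, LinearMap.add_apply, hx c'' hc'', hy c'' hc'', map_add,
      LinearMap.add_apply]
    ring
  zero_mem' := ⟨0, zero_mem _, 0, zero_mem _, by simp, fun c' _ => by simp⟩
  smul_mem' := by
    rintro a x ⟨c, hc, b, hb, rfl, hx⟩
    refine ⟨a • c, Submodule.smul_mem _ a hc, a • b, Submodule.smul_mem _ a hb,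
      by rw [smul_add], ?_⟩
    intro c'' hc''
    rw [map_smul, LinearMap.smul_apply, hx c'' hc'', map_smul, LinearMap.smul_apply,
      smul_eq_mul, smul_eq_mul]
    ring

lemma mem_hodgeC {Cz Bs : ℤ → Submodule ℝ A} {i : ℤ} {x : A} :
    x ∈ X.hodgeC Cz Bs i ↔ ∃ c ∈ Cz i, ∃ b ∈ Bs i, x = c + b ∧
      ∀ c' ∈ Cz (X.n - i), X.pair b c' = -(1/2 : ℝ) * X.pair c c' := Iff.rfl

end PairedComplex

section Statements

variable {A B : Type*} [AddCommGroup A] [Module ℝ A] [AddCommGroup B] [Module ℝ B]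
/-- every cyclic cochain complex is of Hodge type. -/
theorem stmt7 (X : PairedComplex A) (hperf : X.Perfect) : X.IsHodgeType := by
  classical
  -- degreewise kernel and boundary pieces
  set Zs : ℤ → Submodule ℝ A := fun i => LinearMap.ker X.d ⊓ X.grading i with hZs
  set Bs : ℤ → Submodule ℝ A := fun i => LinearMap.range X.d ⊓ X.grading i with hBs
  have hrange_ker : ∀ x ∈ LinearMap.range X.d, X.d x = 0 := by
    rintro x ⟨y, rfl⟩; exact X.d_sq y
  have hBZ : ∀ i, Bs i ≤ Zs i := by
    intro i x hx
    rw [hZs]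
    exact Submodule.mem_inf.mpr ⟨LinearMap.mem_ker.mpr (hrange_ker x (Submodule.mem_inf.mp hx).1),
      (Submodule.mem_inf.mp hx).2⟩
  have hBmem : ∀ i, ∀ b ∈ Bs i, b ∈ LinearMap.range X.d ∧ b ∈ X.grading i :=
    fun i b hb => Submodule.mem_inf.mp hb
  have hZmem : ∀ i, ∀ z ∈ Zs i, X.d z = 0 ∧ z ∈ X.grading i :=
    fun i z hz => ⟨LinearMap.mem_ker.mp (Submodule.mem_inf.mp hz).1,
      (Submodule.mem_inf.mp hz).2⟩
  have hZmem' : ∀ i, ∀ z : A, X.d z = 0 → z ∈ X.grading i → z ∈ Zs i :=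
    fun i z h1 h2 => Submodule.mem_inf.mpr ⟨LinearMap.mem_ker.mpr h1, h2⟩
  have hBmem' : ∀ i, ∀ b : A, b ∈ LinearMap.range X.d → b ∈ X.grading i → b ∈ Bs i :=
    fun i b h1 h2 => Submodule.mem_inf.mpr ⟨h1, h2⟩
  -- choice of harmonic pieces
  obtain ⟨Hs, hHZ, hHBd, hHBs⟩ :
      ∃ Hs : ℤ → Submodule ℝ A, (∀ i, Hs i ≤ Zs i) ∧ (∀ i, Bs i ⊓ Hs i = ⊥) ∧
        (∀ i, Bs i ⊔ Hs i = Zs i) := by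
    choose Hs h1 h2 h3 using fun i => exists_compl_within (Bs i) (Zs i) (hBZ i)
    exact ⟨Hs, h1, h2, h3⟩
  have hHV : ∀ i, Hs i ≤ X.grading i := fun i => (hHZ i).trans inf_le_right
  have hHker : ∀ i, ∀ h ∈ Hs i, X.d h = 0 := fun i h hh => (hZmem i h (hHZ i hh)).1
  have hBV : ∀ i, Bs i ≤ X.grading i := fun i => inf_le_right
  -- pairing facts
  have hpair_bz : ∀ (b z : A), b ∈ LinearMap.range X.d → X.d z = 0 → X.pair b z = 0 :=
    fun b z hb hz => X.pair_range_ker hb hz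
  have hpair_zb : ∀ (b z : A), b ∈ LinearMap.range X.d → X.d z = 0 → X.pair z b = 0 :=
    fun b z hb hz => X.pair_ker_range hb hz
  -- perpendicularity to boundaries implies closed
  have hker_of_perp : ∀ i : ℤ, ∀ x ∈ X.grading i,
      (∀ b ∈ Bs (X.n - i), X.pair x b = 0) → X.d x = 0 := by
    intro i x hx hperp
    apply X.mem_ker_of_perp_range hperf.1 hx
    intro y hy
    refine hperp _ (hBmem' _ _ ⟨y, rfl⟩ ?_)
    have := X.d_degree _ y hy
    rwa [show X.n - i - 1 + 1 = X.n - i from by ring] at this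
  -- choice of a complement of Zs i in the degree i part
  obtain ⟨Ns, hNV, hZN, hZNs⟩ :
      ∃ Ns : ℤ → Submodule ℝ A, (∀ i, Ns i ≤ X.grading i) ∧ (∀ i, Zs i ⊓ Ns i = ⊥) ∧
        (∀ i, Zs i ⊔ Ns i = X.grading i) := by
    choose Ns h1 h2 h3 using fun i => exists_compl_within (Zs i) (X.grading i) inf_le_right
    exact ⟨Ns, h1, h2, h3⟩
  set Ks : ℤ → Submodule ℝ A := fun i => Bs i ⊔ Ns i with hKs
  have hKV : ∀ i, Ks i ≤ X.grading i := fun i => sup_le (hBV i) (hNV i)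
  have hBK : ∀ i, Bs i ≤ Ks i := fun i => le_sup_left
  have hHKdisj : ∀ i, Hs i ⊓ Ks i = ⊥ := by
    intro i
    apply (Submodule.eq_bot_iff _).mpr
    intro x hx
    obtain ⟨hx1, hx2⟩ := Submodule.mem_inf.mp hx
    obtain ⟨b, hb, m, hm, hbm⟩ := Submodule.mem_sup.mp hx2
    have hmZ : m ∈ Zs i := by
      have : m = x - b := by rw [← hbm]; abel
      rw [this]
      exact sub_mem (hHZ i hx1) (hBZ i hb)
    have hm0 : m = 0 := by
      have : m ∈ Zs i ⊓ Ns i := Submodule.mem_inf.mpr ⟨hmZ, hm⟩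
      rwa [hZN i, Submodule.mem_bot] at this
    have hxb : x = b := by rw [← hbm, hm0, add_zero]
    have : x ∈ Bs i ⊓ Hs i := Submodule.mem_inf.mpr ⟨hxb ▸ hb, hx1⟩
    rwa [hHBd i, Submodule.mem_bot] at this
  have hHKsup : ∀ i, Hs i ⊔ Ks i = X.grading i := by
    intro i
    rw [hKs]
    rw [← sup_assoc, sup_comm (Hs i) (Bs i), hHBs i, hZNs i]
  -- key step : degreewise A = H ⊕ perp H
  have hHW : ∀ i : ℤ, ∀ x ∈ X.grading i, ∃ h ∈ Hs i,
      ∀ h' ∈ Hs (X.n - i), X.pair (x - h) h' = 0 := by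
    intro i x hx
    obtain ⟨ψ, hψ1, hψ2⟩ := exists_extend_functional (Hs (X.n - i)) (Ks (X.n - i))
      (X.grading (X.n - i)) (hHV _) (hKV _) (hHKdisj _) (hHKsup _)
      ((X.pair x) ∘ₗ (Hs (X.n - i)).subtype)
    obtain ⟨x', hx', hx'ψ⟩ := hperf.2 i ψ
    have hx'B : ∀ b ∈ Bs (X.n - i), X.pair x' b = 0 := by
      intro b hb
      have hbK : b ∈ Ks (X.n - i) := hBK _ hb
      have h2 : X.pair x' b = ψ ⟨b, hKV _ hbK⟩ := hx'ψ ⟨b, hKV _ hbK⟩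
      rw [h2, hψ2 b hbK]
    have hx'ker : X.d x' = 0 := hker_of_perp i x' hx' hx'B
    have hx'Z : x' ∈ Zs i := hZmem' i x' hx'ker hx'
    rw [← hHBs i] at hx'Z
    obtain ⟨b, hb, h, hh, hbh⟩ := Submodule.mem_sup.mp hx'Z
    refine ⟨h, hh, ?_⟩
    intro h' hh'
    have e1 : X.pair x' h' = ψ ⟨h', hHV _ hh'⟩ := hx'ψ ⟨h', hHV _ hh'⟩
    have e2 : ψ ⟨h', hHV _ hh'⟩ = X.pair x h' := by rw [hψ1 h' hh']; rfl
    have e3 : X.pair b h' = 0 := hpair_bz b h' (hBmem _ _ hb).1 (hHker _ _ hh')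
    have e4 : X.pair x' h' = X.pair b h' + X.pair h h' := by
      rw [← hbh, map_add, LinearMap.add_apply]
    rw [map_sub, LinearMap.sub_apply]
    have : X.pair h h' = X.pair x h' := by
      rw [e1, e2, e3] at e4; linarith
    rw [this, sub_self]
  -- the perp of H in each degree
  set Ws : ℤ → Submodule ℝ A := fun i => X.grading i ⊓ X.perp (Hs (X.n - i)) with hWs
  have hWmem : ∀ i, ∀ w ∈ Ws i, w ∈ X.grading i ∧ ∀ h ∈ Hs (X.n - i), X.pair w h = 0 :=
    fun i w hw => Submodule.mem_inf.mp hw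
  have hWmem' : ∀ i, ∀ w : A, w ∈ X.grading i →
      (∀ h ∈ Hs (X.n - i), X.pair w h = 0) → w ∈ Ws i :=
    fun i w h1 h2 => Submodule.mem_inf.mpr ⟨h1, h2⟩
  have hBW : ∀ i, Bs i ≤ Ws i := by
    intro i b hb
    exact hWmem' i b (hBmem _ _ hb).2
      (fun h hh => hpair_bz b h (hBmem _ _ hb).1 (hHker _ _ hh))
  have hWZB : ∀ i, ∀ x ∈ Ws i, X.d x = 0 → x ∈ Bs i := by
    intro i x hx hxk
    refine hBmem' i x ?_ (hWmem i x hx).1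
    apply X.mem_range_of_perp_ker hperf (hWmem i x hx).1
    intro z hz hzk
    have hzZ : z ∈ Zs (X.n - i) := hZmem' _ z hzk hz
    rw [← hHBs _] at hzZ
    obtain ⟨b, hb, h, hh, rfl⟩ := Submodule.mem_sup.mp hzZ
    rw [map_add]
    rw [hpair_zb b x (hBmem _ _ hb).1 hxk, (hWmem i x hx).2 h hh, add_zero]
  -- choice of a complement of B in W
  obtain ⟨Czs, hCzW, hCzB, hCzBW⟩ :
      ∃ Czs : ℤ → Submodule ℝ A, (∀ i, Czs i ≤ Ws i) ∧ (∀ i, Bs i ⊓ Czs i = ⊥) ∧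
        (∀ i, Bs i ⊔ Czs i = Ws i) := by
    choose Czs h1 h2 h3 using fun i => exists_compl_within (Bs i) (Ws i) (hBW i)
    exact ⟨Czs, h1, h2, h3⟩
  have hCzV : ∀ i, Czs i ≤ X.grading i := fun i => (hCzW i).trans inf_le_left
  have hsupV : ∀ i, Czs i ⊔ (Hs i ⊔ Bs i) = X.grading i := by
    intro i
    apply le_antisymm
    · exact sup_le (hCzV i) (sup_le (hHV i) (hBV i))
    · intro x hx
      obtain ⟨h, hh, hxh⟩ := hHW i x hx
      have hxW : x - h ∈ Ws i :=
        hWmem' i _ (sub_mem hx (hHV _ hh)) (fun h' hh' => hxh h' hh')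
      rw [← hCzBW i] at hxW
      obtain ⟨b, hb, c, hc, hbc⟩ := Submodule.mem_sup.mp hxW
      have hx2 : x = b + c + h := by rw [hbc]; abel
      rw [hx2]
      exact add_mem (add_mem (Submodule.mem_sup_right (Submodule.mem_sup_right hb))
        (Submodule.mem_sup_left hc)) (Submodule.mem_sup_right (Submodule.mem_sup_left hh))
  have hdisjCz : ∀ i, Czs i ⊓ (Hs i ⊔ Bs i) = ⊥ := by
    intro i
    apply (Submodule.eq_bot_iff _).mpr
    intro x hx
    obtain ⟨hx1, hx2⟩ := Submodule.mem_inf.mp hx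
    obtain ⟨h, hh, b, hb, hhb⟩ := Submodule.mem_sup.mp hx2
    have hhW : h ∈ Ws i := by
      have : h = x - b := by rw [← hhb]; abel
      rw [this]
      exact sub_mem (hCzW i hx1) (hBW i hb)
    have hhB : h ∈ Bs i := hWZB i h hhW (hHker i h hh)
    have hh0 : h = 0 := by
      have : h ∈ Bs i ⊓ Hs i := Submodule.mem_inf.mpr ⟨hhB, hh⟩
      rwa [hHBd i, Submodule.mem_bot] at this
    have hxb : x = b := by rw [← hhb, hh0, zero_add]
    have : x ∈ Bs i ⊓ Czs i := Submodule.mem_inf.mpr ⟨hxb ▸ hb, hx1⟩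
    rwa [hCzB i, Submodule.mem_bot] at this
  have hBzero : ∀ i, ∀ b ∈ Bs i, (∀ c ∈ Czs (X.n - i), X.pair b c = 0) → b = 0 := by
    intro i b hb hbc
    apply X.nondeg_graded hperf.1 (hBV _ hb)
    intro y hy
    rw [← hsupV (X.n - i)] at hy
    obtain ⟨c, hc, w, hw, hcw⟩ := Submodule.mem_sup.mp hy
    obtain ⟨h, hh, b', hb', hhb⟩ := Submodule.mem_sup.mp hw
    rw [← hcw, ← hhb, map_add, map_add]
    rw [hbc c hc, hpair_bz b h (hBmem _ _ hb).1 (hHker _ _ hh),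
      hpair_bz b b' (hBmem _ _ hb).1 (hrange_ker b' (hBmem _ _ hb').1)]
    ring
  -- existence of the correction term
  have hexf : ∀ i : ℤ, ∀ c ∈ Czs i, ∃ b ∈ Bs i,
      ∀ c' ∈ Czs (X.n - i), X.pair b c' = -(1/2 : ℝ) * X.pair c c' := by
    intro i c hc
    obtain ⟨ψ, hψ1, hψ2⟩ := exists_extend_functional (Czs (X.n - i))
      (Hs (X.n - i) ⊔ Bs (X.n - i)) (X.grading (X.n - i)) (hCzV _)
      (sup_le (hHV _) (hBV _)) (hdisjCz _) (hsupV _)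
      (((-(1/2 : ℝ)) • (X.pair c)) ∘ₗ (Czs (X.n - i)).subtype)
    obtain ⟨b, hbV, hbψ⟩ := hperf.2 i ψ
    have hbHB : ∀ y ∈ Hs (X.n - i) ⊔ Bs (X.n - i), X.pair b y = 0 := by
      intro y hy
      have h2 : X.pair b y = ψ ⟨y, sup_le (hHV _) (hBV _) hy⟩ :=
        hbψ ⟨y, sup_le (hHV _) (hBV _) hy⟩
      rw [h2, hψ2 y hy]
    have hbker : X.d b = 0 := by
      apply hker_of_perp i b hbV
      intro bb hbb
      exact hbHB bb (Submodule.mem_sup_right hbb)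
    have hbB : b ∈ Bs i := by
      refine hBmem' i b ?_ hbV
      apply X.mem_range_of_perp_ker hperf hbV
      intro z hz hzk
      have hzZ : z ∈ Zs (X.n - i) := hZmem' _ z hzk hz
      rw [← hHBs _] at hzZ
      obtain ⟨b', hb', h, hh, rfl⟩ := Submodule.mem_sup.mp hzZ
      rw [map_add]
      rw [hpair_zb b' b (hBmem _ _ hb').1 hbker,
        hbHB h (Submodule.mem_sup_left hh)]
      ring
    refine ⟨b, hbB, ?_⟩
    intro c' hc'
    have h1 : X.pair b c' = ψ ⟨c', hCzV _ hc'⟩ := hbψ ⟨c', hCzV _ hc'⟩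
    rw [h1, hψ1 c' hc']
    simp
  -- the isotropic complement pieces
  set Cs : ℤ → Submodule ℝ A := X.hodgeC Czs Bs with hCs
  have hCsV : ∀ i, Cs i ≤ X.grading i := by
    rintro i x ⟨c, hc, b, hb, rfl, _⟩
    exact add_mem (hCzV _ hc) (hBV _ hb)
  have hCsker : ∀ i, ∀ x ∈ Cs i, X.d x = 0 → x = 0 := by
    rintro i x ⟨c, hc, b, hb, rfl, hpr⟩ hxk
    have hdb : X.d b = 0 := hrange_ker b (hBmem _ _ hb).1
    have hdc : X.d c = 0 := by
      rw [map_add, hdb, add_zero] at hxk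
      exact hxk
    have hcB : c ∈ Bs i := hWZB i c (hCzW i hc) hdc
    have hc0 : c = 0 := by
      have : c ∈ Bs i ⊓ Czs i := Submodule.mem_inf.mpr ⟨hcB, hc⟩
      rwa [hCzB i, Submodule.mem_bot] at this
    subst hc0
    have hb0 : b = 0 := by
      apply hBzero i b hb
      intro c' hc'
      rw [hpr c' hc', map_zero, LinearMap.zero_apply, mul_zero]
    rw [hb0, zero_add]
  have hCsSup : ∀ i, ∀ v ∈ X.grading i, ∃ x ∈ Cs i, ∃ z, X.d z = 0 ∧ v = x + z := by
    intro i v hv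
    rw [← hsupV i] at hv
    obtain ⟨c, hc, w, hw, hcw⟩ := Submodule.mem_sup.mp hv
    obtain ⟨h, hh, b', hb', hhb⟩ := Submodule.mem_sup.mp hw
    obtain ⟨b, hb, hbpr⟩ := hexf i c hc
    refine ⟨c + b, ⟨c, hc, b, hb, rfl, hbpr⟩, h + b' - b, ?_, ?_⟩
    · rw [map_sub, map_add, hHker _ _ hh, hrange_ker b' (hBmem _ _ hb').1,
        hrange_ker b (hBmem _ _ hb).1]
      abel
    · rw [← hcw, ← hhb]; abel
  have hCsiso : ∀ i j : ℤ, ∀ x ∈ Cs i, ∀ y ∈ Cs j, X.pair x y = 0 := by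
    intro i j x hx y hy
    by_cases hij : i + j = X.n
    · have hj : j = X.n - i := by omega
      subst hj
      obtain ⟨c₁, hc₁, b₁, hb₁, rfl, P₁⟩ := hx
      obtain ⟨c₂, hc₂, b₂, hb₂, rfl, P₂⟩ := hy
      rw [show X.n - (X.n - i) = i from by ring] at P₂
      have t1 : X.pair b₁ b₂ = 0 :=
        hpair_bz b₁ b₂ (hBmem _ _ hb₁).1 (hrange_ker b₂ (hBmem _ _ hb₂).1)
      have t2 : X.pair b₁ c₂ = -(1/2 : ℝ) * X.pair c₁ c₂ := P₁ c₂ hc₂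
      have t3 : X.pair b₂ c₁ = -(1/2 : ℝ) * X.pair c₂ c₁ := P₂ c₁ hc₁
      have t4 : X.pair c₁ b₂ = (-1 : ℝ) ^ (i * (X.n - i)) * X.pair b₂ c₁ :=
        X.pair_symm i (X.n - i) c₁ (hCzV _ hc₁) b₂ (hBV _ hb₂)
      have t5 : X.pair c₁ c₂ = (-1 : ℝ) ^ (i * (X.n - i)) * X.pair c₂ c₁ :=
        X.pair_symm i (X.n - i) c₁ (hCzV _ hc₁) c₂ (hCzV _ hc₂)
      have t6 : X.pair c₁ b₂ = -(1/2 : ℝ) * X.pair c₁ c₂ := by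
        rw [t4, t3, t5]; ring
      have expand : X.pair (c₁ + b₁) (c₂ + b₂) =
          X.pair c₁ c₂ + X.pair c₁ b₂ + X.pair b₁ c₂ + X.pair b₁ b₂ := by
        simp only [map_add, LinearMap.add_apply]
        ring
      rw [expand, t1, t2, t6]; ring
    · exact X.pair_degree i j hij x (hCsV i hx) y (hCsV j hy)
  have hCsH : ∀ i j : ℤ, ∀ x ∈ Cs i, ∀ h ∈ Hs j, X.pair x h = 0 := by
    intro i j x hx h hh
    by_cases hij : i + j = X.n
    · have hj : j = X.n - i := by omega
      subst hj
      obtain ⟨c, hc, b, hb, rfl, _⟩ := hx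
      rw [map_add, LinearMap.add_apply]
      rw [(hWmem i c (hCzW i hc)).2 h hh,
        hpair_bz b h (hBmem _ _ hb).1 (hHker _ _ hh)]
      ring
    · exact X.pair_degree i j hij x (hCsV i hx) h (hHV j hh)
  -- projections into graded families of submodules
  have hprS : ∀ (S : ℤ → Submodule ℝ A), (∀ i, S i ≤ X.grading i) →
      ∀ x ∈ (⨆ i, S i), ∀ i, X.pr i x ∈ S i := by
    intro S hS x hx i
    have hsub : (⨆ k, S k) ≤ ⨅ k, (S k).comap (X.pr k) := by
      apply iSup_le
      intro k y hy
      rw [Submodule.mem_iInf]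
      intro k'
      rw [Submodule.mem_comap]
      rcases eq_or_ne k' k with rfl | hne
      · rw [X.pr_of_mem (hS k' hy)]; exact hy
      · rw [X.pr_of_mem_ne (hS k hy) hne]; exact zero_mem _
    exact Submodule.mem_comap.mp ((Submodule.mem_iInf _).mp (hsub hx) i)
  -- assemble
  refine ⟨⨆ i, Hs i, ⨆ i, Cs i, le_top, le_top, ?_, ?_, ?_, ?_, ?_, ?_, ?_, ?_, ?_⟩
  · -- graded H
    intro x hx
    obtain ⟨s, hs⟩ := X.exists_sum_pr x
    rw [hs]
    apply sum_mem
    intro i _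
    apply Submodule.mem_iSup_of_mem i
    exact Submodule.mem_inf.mpr ⟨le_iSup Hs i (hprS Hs hHV x hx i), X.pr_mem i x⟩
  · -- graded C
    intro x hx
    obtain ⟨s, hs⟩ := X.exists_sum_pr x
    rw [hs]
    apply sum_mem
    intro i _
    apply Submodule.mem_iSup_of_mem i
    exact Submodule.mem_inf.mpr ⟨le_iSup Cs i (hprS Cs hCsV x hx i), X.pr_mem i x⟩
  · -- H ≤ ker d
    apply iSup_le
    intro i
    exact (hHZ i).trans inf_le_left
  · -- H ⊓ d(⊤) = ⊥
    rw [Submodule.map_top]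
    apply (Submodule.eq_bot_iff _).mpr
    intro x hx
    obtain ⟨hx1, hx2⟩ := Submodule.mem_inf.mp hx
    obtain ⟨s, hs⟩ := X.exists_sum_pr x
    have hzero : ∀ i, X.pr i x = 0 := by
      intro i
      have h1 : X.pr i x ∈ Hs i := hprS Hs hHV x hx1 i
      have h2 : X.pr i x ∈ Bs i := hBmem' i _ (X.pr_range hx2 i) (X.pr_mem i x)
      have : X.pr i x ∈ Bs i ⊓ Hs i := Submodule.mem_inf.mpr ⟨h2, h1⟩
      rwa [hHBd i, Submodule.mem_bot] at this
    rw [hs]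
    exact Finset.sum_eq_zero fun i _ => hzero i
  · -- H ⊔ d(⊤) = ker d ⊓ ⊤
    rw [Submodule.map_top, inf_top_eq]
    apply le_antisymm
    · apply sup_le
      · apply iSup_le
        intro i
        exact (hHZ i).trans inf_le_left
      · intro x hx
        exact LinearMap.mem_ker.mpr (hrange_ker x hx)
    · intro x hx
      obtain ⟨s, hs⟩ := X.exists_sum_pr x
      rw [hs]
      apply sum_mem
      intro i _
      have hZi : X.pr i x ∈ Zs i :=
        hZmem' i _ (X.pr_ker (LinearMap.mem_ker.mp hx) i) (X.pr_mem i x)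
      rw [← hHBs i] at hZi
      obtain ⟨b, hb, h, hh, hbh⟩ := Submodule.mem_sup.mp hZi
      rw [← hbh]
      exact add_mem (Submodule.mem_sup_right (hBmem _ _ hb).1)
        (Submodule.mem_sup_left (le_iSup Hs i hh))
  · -- C ⊓ ker d = ⊥
    apply (Submodule.eq_bot_iff _).mpr
    intro x hx
    obtain ⟨hx1, hx2⟩ := Submodule.mem_inf.mp hx
    obtain ⟨s, hs⟩ := X.exists_sum_pr x
    rw [hs]
    apply Finset.sum_eq_zero
    intro i _
    exact hCsker i _ (hprS Cs hCsV x hx1 i) (X.pr_ker (LinearMap.mem_ker.mp hx2) i)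
  · -- C ⊔ (ker d ⊓ ⊤) = ⊤
    rw [inf_top_eq]
    apply eq_top_iff.mpr
    intro x _
    obtain ⟨s, hs⟩ := X.exists_sum_pr x
    rw [hs]
    apply sum_mem
    intro i _
    obtain ⟨xc, hxc, z, hz, hxz⟩ := hCsSup i _ (X.pr_mem i x)
    rw [hxz]
    exact add_mem (Submodule.mem_sup_left (le_iSup Cs i hxc))
      (Submodule.mem_sup_right (LinearMap.mem_ker.mpr hz))
  · -- isotropy of C
    intro c hc c' hc'
    apply X.pair_eq_zero_of_pr
    intro i j
    exact hCsiso i j _ (hprS Cs hCsV c hc i) _ (hprS Cs hCsV c' hc' j)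
  · -- C ⊥ H
    intro c hc h hh
    apply X.pair_eq_zero_of_pr
    intro i j
    exact hCsH i j _ (hprS Cs hCsV c hc i) _ (hprS Hs hHV h hh j)

end Statements
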